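/- Let Y_1, …, Y_k be independent random variables, each uniformly distributed on {0,1}, and let a_1, …, a_k be non-negative real numbers. Define X = Σ_{i=1}^k a_i Y_i, let μ = E[X] and σ = √(Var(X)). Then for every real c ∈ [0,1], Pr(X ≥ μ + c·σ) ≥ (1 − c)²/4. -/

import Mathlib

open MeasureTheory ProbabilityTheory

set_option maxHeartbeats 1000000

namespace BernoulliAnticoncentrationAux

open Finset
open scoped ENNReal

section
variable {Ω : Type*} [MeasureSpace Ω] [IsProbabilityMeasure (ℙ : Measure Ω)]
variable {k : ℕ} {Y : Fin k → Ω → ℝ} {a : Fin k → ℝ}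

lemma zmeas (hmeas : ∀ i, Measurable (Y i)) (t : Finset (Fin k)) :
    Measurable (fun ω => ∑ i ∈ t, a i * (Y i ω - 1/2)) := by
  apply Finset.measurable_sum
  intro i _
  exact ((hmeas i).sub measurable_const).const_mul _

lemma indep_sum (hmeas : ∀ i, Measurable (Y i))
    (hindep : iIndepFun Y ℙ)
    {t : Finset (Fin k)} {j : Fin k} (hj : j ∉ t) :
    IndepFun (fun ω => ∑ i ∈ t, a i * (Y i ω - 1/2)) (Y j) ℙ := by
  classical
  set g : Fin k → Ω → ℝ := fun i ω => if i = j then Y i ω else a i * (Y i ω - 1/2) with hg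
  have hφ : ∀ i : Fin k, Measurable (fun x : ℝ => if i = j then x else a i * (x - 1/2)) := by
    intro i
    by_cases h : i = j
    · simp only [h, if_true]; exact measurable_id
    · simp only [h, if_false]; exact (measurable_id.sub measurable_const).const_mul _
  have hgi : iIndepFun g ℙ :=
    hindep.comp (fun i x => if i = j then x else a i * (x - 1/2)) hφ
  have hgm : ∀ i, Measurable (g i) := fun i => (hφ i).comp (hmeas i)
  have h := hgi.indepFun_finset_sum_of_notMem hgm hj
  have h1 : (∑ i ∈ t, g i) = (fun ω => ∑ i ∈ t, a i * (Y i ω - 1/2)) := by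
    funext ω
    rw [Finset.sum_apply]
    exact Finset.sum_congr rfl fun i hi => by
      simp only [hg]; rw [if_neg (by rintro rfl; exact hj hi)]
  have h2 : g j = Y j := by funext ω; simp [hg]
  rw [h1, h2] at h
  exact h

lemma prob_zero (hmeas : ∀ i, Measurable (Y i)) (hval : ∀ i ω, Y i ω = 0 ∨ Y i ω = 1)
    (hdist : ∀ i, ℙ {ω | Y i ω = 1} = 1 / 2) (j : Fin k) :
    ℙ {ω | Y j ω = 0} = 1 / 2 := by
  have hset : {ω | Y j ω = 0} = {ω | Y j ω = 1}ᶜ := by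
    ext ω
    rcases hval j ω with h | h <;> simp [h]
  have hm : MeasurableSet {ω | Y j ω = 1} := hmeas j (measurableSet_singleton 1)
  rw [hset, measure_compl hm (measure_ne_top _ _), hdist j]
  rw [measure_univ, one_div, ENNReal.one_sub_inv_two]

lemma decomp (hmeas : ∀ i, Measurable (Y i))
    (hindep : iIndepFun Y ℙ)
    (hval : ∀ i ω, Y i ω = 0 ∨ Y i ω = 1)
    (hdist : ∀ i, ℙ {ω | Y i ω = 1} = 1 / 2)
    {t : Finset (Fin k)} {j : Fin k} (hj : j ∉ t) (x : ℝ) :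
    ℙ {ω | x ≤ a j * (Y j ω - 1/2) + ∑ i ∈ t, a i * (Y i ω - 1/2)}
      = 1/2 * ℙ {ω | x - a j / 2 ≤ ∑ i ∈ t, a i * (Y i ω - 1/2)}
      + 1/2 * ℙ {ω | x + a j / 2 ≤ ∑ i ∈ t, a i * (Y i ω - 1/2)} := by
  have hZ : Measurable (fun ω => ∑ i ∈ t, a i * (Y i ω - 1/2)) := zmeas hmeas t
  have hind : IndepFun (fun ω => ∑ i ∈ t, a i * (Y i ω - 1/2)) (Y j) ℙ :=
    indep_sum hmeas hindep hj
  have hsplit : {ω | x ≤ a j * (Y j ω - 1/2) + ∑ i ∈ t, a i * (Y i ω - 1/2)}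
      = ({ω | x - a j / 2 ≤ ∑ i ∈ t, a i * (Y i ω - 1/2)} ∩ {ω | Y j ω = 1})
        ∪ ({ω | x + a j / 2 ≤ ∑ i ∈ t, a i * (Y i ω - 1/2)} ∩ {ω | Y j ω = 0}) := by
    ext ω
    rcases hval j ω with h | h <;>
      simp only [Set.mem_setOf_eq, Set.mem_union, Set.mem_inter_iff, h] <;> norm_num <;>
      constructor <;> intro h' <;> linarith
  have hdisj : Disjoint
      ({ω | x - a j / 2 ≤ ∑ i ∈ t, a i * (Y i ω - 1/2)} ∩ {ω | Y j ω = 1})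
      ({ω | x + a j / 2 ≤ ∑ i ∈ t, a i * (Y i ω - 1/2)} ∩ {ω | Y j ω = 0}) := by
    apply Set.disjoint_left.mpr
    rintro ω ⟨_, h1⟩ ⟨_, h0⟩
    simp only [Set.mem_setOf_eq] at h1 h0
    rw [h0] at h1; norm_num at h1
  have hm1 : MeasurableSet ({ω | x + a j / 2 ≤ ∑ i ∈ t, a i * (Y i ω - 1/2)} ∩ {ω | Y j ω = 0}) :=
    (measurableSet_le measurable_const hZ).inter (hmeas j (measurableSet_singleton 0))
  rw [hsplit, measure_union hdisj hm1]
  have e1 : ℙ ({ω | x - a j / 2 ≤ ∑ i ∈ t, a i * (Y i ω - 1/2)} ∩ {ω | Y j ω = 1})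
      = ℙ {ω | x - a j / 2 ≤ ∑ i ∈ t, a i * (Y i ω - 1/2)} * ℙ {ω | Y j ω = 1} :=
    hind.measure_inter_preimage_eq_mul (Set.Ici (x - a j / 2)) {1}
      measurableSet_Ici (measurableSet_singleton 1)
  have e0 : ℙ ({ω | x + a j / 2 ≤ ∑ i ∈ t, a i * (Y i ω - 1/2)} ∩ {ω | Y j ω = 0})
      = ℙ {ω | x + a j / 2 ≤ ∑ i ∈ t, a i * (Y i ω - 1/2)} * ℙ {ω | Y j ω = 0} :=
    hind.measure_inter_preimage_eq_mul (Set.Ici (x + a j / 2)) {0}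
      measurableSet_Ici (measurableSet_singleton 0)
  rw [e1, e0, hdist j, prob_zero hmeas hval hdist j, mul_comm, mul_comm (ℙ {ω | x + a j / 2 ≤ _})]

lemma decomp' (hmeas : ∀ i, Measurable (Y i))
    (hindep : iIndepFun Y ℙ)
    (hval : ∀ i ω, Y i ω = 0 ∨ Y i ω = 1)
    (hdist : ∀ i, ℙ {ω | Y i ω = 1} = 1 / 2)
    {t : Finset (Fin k)} {j : Fin k} (hj : j ∉ t) (x : ℝ) :
    ℙ {ω | a j * (Y j ω - 1/2) + ∑ i ∈ t, a i * (Y i ω - 1/2) ≤ x}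
      = 1/2 * ℙ {ω | ∑ i ∈ t, a i * (Y i ω - 1/2) ≤ x - a j / 2}
      + 1/2 * ℙ {ω | ∑ i ∈ t, a i * (Y i ω - 1/2) ≤ x + a j / 2} := by
  have hZ : Measurable (fun ω => ∑ i ∈ t, a i * (Y i ω - 1/2)) := zmeas hmeas t
  have hind : IndepFun (fun ω => ∑ i ∈ t, a i * (Y i ω - 1/2)) (Y j) ℙ :=
    indep_sum hmeas hindep hj
  have hsplit : {ω | a j * (Y j ω - 1/2) + ∑ i ∈ t, a i * (Y i ω - 1/2) ≤ x}
      = ({ω | ∑ i ∈ t, a i * (Y i ω - 1/2) ≤ x - a j / 2} ∩ {ω | Y j ω = 1})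
        ∪ ({ω | ∑ i ∈ t, a i * (Y i ω - 1/2) ≤ x + a j / 2} ∩ {ω | Y j ω = 0}) := by
    ext ω
    rcases hval j ω with h | h <;>
      simp only [Set.mem_setOf_eq, Set.mem_union, Set.mem_inter_iff, h] <;> norm_num <;>
      constructor <;> intro h' <;> linarith
  have hdisj : Disjoint
      ({ω | ∑ i ∈ t, a i * (Y i ω - 1/2) ≤ x - a j / 2} ∩ {ω | Y j ω = 1})
      ({ω | ∑ i ∈ t, a i * (Y i ω - 1/2) ≤ x + a j / 2} ∩ {ω | Y j ω = 0}) := by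
    apply Set.disjoint_left.mpr
    rintro ω ⟨_, h1⟩ ⟨_, h0⟩
    simp only [Set.mem_setOf_eq] at h1 h0
    rw [h0] at h1; norm_num at h1
  have hm1 : MeasurableSet ({ω | ∑ i ∈ t, a i * (Y i ω - 1/2) ≤ x + a j / 2} ∩ {ω | Y j ω = 0}) :=
    (measurableSet_le hZ measurable_const).inter (hmeas j (measurableSet_singleton 0))
  rw [hsplit, measure_union hdisj hm1]
  have e1 : ℙ ({ω | ∑ i ∈ t, a i * (Y i ω - 1/2) ≤ x - a j / 2} ∩ {ω | Y j ω = 1})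
      = ℙ {ω | ∑ i ∈ t, a i * (Y i ω - 1/2) ≤ x - a j / 2} * ℙ {ω | Y j ω = 1} :=
    hind.measure_inter_preimage_eq_mul (Set.Iic (x - a j / 2)) {1}
      measurableSet_Iic (measurableSet_singleton 1)
  have e0 : ℙ ({ω | ∑ i ∈ t, a i * (Y i ω - 1/2) ≤ x + a j / 2} ∩ {ω | Y j ω = 0})
      = ℙ {ω | ∑ i ∈ t, a i * (Y i ω - 1/2) ≤ x + a j / 2} * ℙ {ω | Y j ω = 0} :=
    hind.measure_inter_preimage_eq_mul (Set.Iic (x + a j / 2)) {0}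
      measurableSet_Iic (measurableSet_singleton 0)
  rw [e1, e0, hdist j, prob_zero hmeas hval hdist j, mul_comm,
    mul_comm (ℙ {ω | ∑ i ∈ t, a i * (Y i ω - 1/2) ≤ x + a j / 2})]

lemma symm_prob (hmeas : ∀ i, Measurable (Y i))
    (hindep : iIndepFun Y ℙ)
    (hval : ∀ i ω, Y i ω = 0 ∨ Y i ω = 1)
    (hdist : ∀ i, ℙ {ω | Y i ω = 1} = 1 / 2)
    (t : Finset (Fin k)) : ∀ x : ℝ,
    ℙ {ω | x ≤ ∑ i ∈ t, a i * (Y i ω - 1/2)}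
      = ℙ {ω | ∑ i ∈ t, a i * (Y i ω - 1/2) ≤ -x} := by
  classical
  induction t using Finset.induction_on with
  | empty =>
      intro x
      simp only [Finset.sum_empty]
      congr 1
      ext ω
      simp only [Set.mem_setOf_eq]
      constructor <;> intro <;> linarith
  | insert j t hj ih =>
      intro x
      simp only [Finset.sum_insert hj]
      rw [decomp hmeas hindep hval hdist hj x, decomp' hmeas hindep hval hdist hj (-x),
        ih (x - a j / 2), ih (x + a j / 2)]
      have e1 : -(x - a j / 2) = -x + a j / 2 := by ring
      have e2 : -(x + a j / 2) = -x - a j / 2 := by ring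
      rw [e1, e2, add_comm]

lemma half_le (hmeas : ∀ i, Measurable (Y i))
    (hindep : iIndepFun Y ℙ)
    (hval : ∀ i ω, Y i ω = 0 ∨ Y i ω = 1)
    (hdist : ∀ i, ℙ {ω | Y i ω = 1} = 1 / 2)
    (t : Finset (Fin k)) :
    (1/2 : ℝ≥0∞) ≤ ℙ {ω | 0 ≤ ∑ i ∈ t, a i * (Y i ω - 1/2)} := by
  have hs := symm_prob (a := a) hmeas hindep hval hdist t 0
  rw [neg_zero] at hs
  have hcover : (1 : ℝ≥0∞) ≤ ℙ {ω | 0 ≤ ∑ i ∈ t, a i * (Y i ω - 1/2)}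
      + ℙ {ω | ∑ i ∈ t, a i * (Y i ω - 1/2) ≤ 0} := by
    calc (1 : ℝ≥0∞) = ℙ (Set.univ : Set Ω) := (measure_univ).symm
    _ ≤ ℙ ({ω | 0 ≤ ∑ i ∈ t, a i * (Y i ω - 1/2)} ∪ {ω | ∑ i ∈ t, a i * (Y i ω - 1/2) ≤ 0}) := by
        apply measure_mono
        intro ω _
        rcases le_total (0:ℝ) (∑ i ∈ t, a i * (Y i ω - 1/2)) with h | h
        · exact Or.inl h
        · exact Or.inr h
    _ ≤ _ := measure_union_le _ _
  rw [← hs, ← two_mul] at hcover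
  calc (1/2 : ℝ≥0∞) = 2⁻¹ * 1 := by rw [one_div, mul_one]
  _ ≤ 2⁻¹ * (2 * ℙ {ω | 0 ≤ ∑ i ∈ t, a i * (Y i ω - 1/2)}) := mul_le_mul_right hcover _
  _ = ℙ {ω | 0 ≤ ∑ i ∈ t, a i * (Y i ω - 1/2)} := by
      rw [← mul_assoc, ENNReal.inv_mul_cancel (by norm_num) (by norm_num), one_mul]

lemma ofReal_half' : ENNReal.ofReal (1/2 : ℝ) = 1/2 := by
  rw [ENNReal.ofReal_div_of_pos two_pos, ENNReal.ofReal_one, ENNReal.ofReal_ofNat]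

private lemma ineq_one (σ σ' b c : ℝ) (hA : σ'^2 + b^2 = σ^2) (hsp : 0 ≤ σ')
    (hG : 0 ≤ c) (hσ : 0 < σ) (hss : σ' ≤ σ) (hc1 : c ≤ 1) :
    (1-c)^2*σ'^2 ≤ (σ' - c*σ)^2 + b^2 := by
  nlinarith [mul_nonneg (mul_nonneg hG hσ.le) (sub_nonneg.2 hss),
    mul_nonneg (sq_nonneg (1-c)) (mul_nonneg (sub_nonneg.2 hss) (by linarith : (0:ℝ) ≤ σ + σ'))]

private lemma ineq_two (σ σ' b c : ℝ) (hA : σ'^2 + b^2 = σ^2) (hB : 0 ≤ b) (hC : b ≤ c*σ)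
    (hD : σ' ≤ c*σ + b) (hE : 0 < σ') (hF : c ≤ 1) (hG : 0 ≤ c) (hσ : 0 < σ) (hss : σ' ≤ σ)
    (hsb : σ ≤ σ' + b) :
    2*(1-c)^2*σ'^2 ≤ (σ' + b - c*σ)^2 := by
  rcases le_total b σ' with hbs | hbs
  · nlinarith [mul_nonneg (sub_nonneg.2 hsb) (sub_nonneg.2 hss),
      mul_nonneg (sub_nonneg.2 hD) (sub_nonneg.2 hbs),
      mul_nonneg (sub_nonneg.2 hD) (sub_nonneg.2 hss),
      mul_nonneg (sub_nonneg.2 hsb) (sub_nonneg.2 hbs),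
      mul_nonneg (sub_nonneg.2 hC) (sub_nonneg.2 hbs),
      mul_nonneg (sub_nonneg.2 hC) (sub_nonneg.2 hss),
      mul_nonneg (sub_nonneg.2 hF) hG, mul_nonneg hB hE.le,
      sq_nonneg (σ' + b - σ), sq_nonneg (1-c), sq_nonneg (σ'-b), sq_nonneg (c*σ - b),
      mul_pos hE hσ]
  · nlinarith [mul_nonneg (mul_nonneg (sq_nonneg (1-c)) (sub_nonneg.2 hbs)) (by linarith : (0:ℝ) ≤ b + σ'),
      mul_nonneg (by linarith : (0:ℝ) ≤ σ' + b - σ) (by nlinarith : (0:ℝ) ≤ σ' + b - c*σ + (1-c)*σ)]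

lemma main_empty (c : ℝ) (hc0 : 0 ≤ c) (hc1 : c ≤ 1) :
    ENNReal.ofReal ((1 - c)^2/4) ≤
      ℙ {ω : Ω | c * Real.sqrt ((∑ i ∈ (∅ : Finset (Fin k)), a i ^ 2)/4)
        ≤ ∑ i ∈ (∅ : Finset (Fin k)), a i * (Y i ω - 1/2)} := by
  have hset : {ω : Ω | c * Real.sqrt ((∑ i ∈ (∅ : Finset (Fin k)), a i ^ 2)/4)
      ≤ ∑ i ∈ (∅ : Finset (Fin k)), a i * (Y i ω - 1/2)} = Set.univ := by
    ext ω
    simp [Real.sqrt_zero]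
  rw [hset, measure_univ]
  exact ENNReal.ofReal_le_one.mpr (by nlinarith)

lemma mainAux (ha : ∀ i, 0 ≤ a i) (hmeas : ∀ i, Measurable (Y i))
    (hindep : iIndepFun Y ℙ)
    (hval : ∀ i ω, Y i ω = 0 ∨ Y i ω = 1)
    (hdist : ∀ i, ℙ {ω | Y i ω = 1} = 1 / 2) :
    ∀ (n : ℕ) (t : Finset (Fin k)), t.card ≤ n → ∀ c : ℝ, 0 ≤ c → c ≤ 1 →
    ENNReal.ofReal ((1 - c)^2/4) ≤
      ℙ {ω | c * Real.sqrt ((∑ i ∈ t, a i ^ 2)/4) ≤ ∑ i ∈ t, a i * (Y i ω - 1/2)} := by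
  intro n
  induction n with
  | zero =>
      intro t ht c hc0 hc1
      rw [Finset.card_eq_zero.mp (Nat.le_zero.mp ht)]
      exact main_empty c hc0 hc1
  | succ n ih =>
      intro t ht c hc0 hc1
      rcases Finset.eq_empty_or_nonempty t with rfl | hne
      · exact main_empty c hc0 hc1
      obtain ⟨j, hjt⟩ := hne
      have hjer : j ∉ t.erase j := Finset.notMem_erase j t
      have hcard' : (t.erase j).card ≤ n := by
        have h1 := Finset.card_erase_of_mem hjt
        have h2 : 1 ≤ t.card := Finset.card_pos.mpr ⟨j, hjt⟩
        omega
      have hts : t = insert j (t.erase j) := (Finset.insert_erase hjt).symm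
      rw [hts]
      simp only [Finset.sum_insert hjer]
      set σ' : ℝ := Real.sqrt ((∑ i ∈ t.erase j, a i ^ 2)/4) with hσ'def
      set σ : ℝ := Real.sqrt ((a j ^ 2 + ∑ i ∈ t.erase j, a i ^ 2)/4) with hσdef
      have hb0 : (0:ℝ) ≤ a j / 2 := by have := ha j; linarith
      have hσ'0 : 0 ≤ σ' := Real.sqrt_nonneg _
      have hσ0 : 0 ≤ σ := Real.sqrt_nonneg _
      have hsum0 : (0:ℝ) ≤ (∑ i ∈ t.erase j, a i ^ 2) := by positivity
      have hσ'2 : σ'^2 = (∑ i ∈ t.erase j, a i ^ 2)/4 := Real.sq_sqrt (by positivity)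
      have hσ2 : σ^2 = (a j ^ 2 + ∑ i ∈ t.erase j, a i ^ 2)/4 := by
        apply Real.sq_sqrt
        positivity
      have hA : σ'^2 + (a j / 2)^2 = σ^2 := by rw [hσ'2, hσ2]; ring
      have hss : σ' ≤ σ := by
        apply Real.sqrt_le_sqrt
        nlinarith [sq_nonneg (a j)]
      rcases le_or_gt (c * σ) (a j / 2) with hcase | hcase
      · -- Case 1 : the single weight already exceeds c·σ
        have hsub : ({ω | 0 ≤ ∑ i ∈ t.erase j, a i * (Y i ω - 1/2)} ∩ {ω | Y j ω = 1})
            ⊆ {ω | c * σ ≤ a j * (Y j ω - 1/2) + ∑ i ∈ t.erase j, a i * (Y i ω - 1/2)} := by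
          rintro ω ⟨h1, h2⟩
          simp only [Set.mem_setOf_eq] at h1 h2 ⊢
          rw [h2]
          linarith
        have hint : ℙ ({ω | 0 ≤ ∑ i ∈ t.erase j, a i * (Y i ω - 1/2)} ∩ {ω | Y j ω = 1})
            = ℙ {ω | 0 ≤ ∑ i ∈ t.erase j, a i * (Y i ω - 1/2)} * ℙ {ω | Y j ω = 1} :=
          (indep_sum hmeas hindep hjer).measure_inter_preimage_eq_mul (Set.Ici 0) {1}
            measurableSet_Ici (measurableSet_singleton 1)
        calc ENNReal.ofReal ((1-c)^2/4)
            ≤ ENNReal.ofReal ((1/2) * (1/2)) := ENNReal.ofReal_le_ofReal (by nlinarith)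
          _ = (1/2 : ℝ≥0∞) * (1/2) := by
              rw [ENNReal.ofReal_mul (by norm_num), ofReal_half']
          _ ≤ ℙ {ω | 0 ≤ ∑ i ∈ t.erase j, a i * (Y i ω - 1/2)} * (1/2) :=
              mul_le_mul_left (half_le hmeas hindep hval hdist (t.erase j)) _
          _ = ℙ ({ω | 0 ≤ ∑ i ∈ t.erase j, a i * (Y i ω - 1/2)} ∩ {ω | Y j ω = 1}) := by
              rw [hint, hdist j]
          _ ≤ _ := measure_mono hsub
      · -- Case 2 : peel off coordinate j
        have hcσpos : 0 < c * σ := lt_of_le_of_lt hb0 hcase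
        have hσpos : 0 < σ := by nlinarith
        have hcpos : 0 < c := by nlinarith
        have hbσ : a j / 2 < σ := by nlinarith
        have hσ'pos : 0 < σ' := by
          have h2 : 0 < σ'^2 := by nlinarith
          exact lt_of_le_of_ne hσ'0 (fun h => by rw [← h] at h2; norm_num at h2)
        have hsb : σ ≤ σ' + a j / 2 := by nlinarith [mul_nonneg hσ'0 hb0]
        have hsq : (c * σ - a j / 2)^2 ≤ σ'^2 := by
          nlinarith [mul_nonneg hb0 (sub_nonneg.2 hcase.le),
            mul_nonneg (mul_nonneg (sub_nonneg.2 hc1) (by linarith : (0:ℝ) ≤ 1 + c)) (sq_nonneg σ)]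
        have hcm1' : c * σ - a j / 2 ≤ σ' := by
          have h5 := Real.sqrt_le_sqrt hsq
          rw [Real.sqrt_sq (by linarith), Real.sqrt_sq hσ'pos.le] at h5
          exact h5
        set cm : ℝ := (c * σ - a j / 2)/σ' with hcmdef
        set cp : ℝ := (c * σ + a j / 2)/σ' with hcpdef
        have hcm_mul : cm * σ' = c * σ - a j / 2 := div_mul_cancel₀ _ hσ'pos.ne'
        have hcp_mul : cp * σ' = c * σ + a j / 2 := div_mul_cancel₀ _ hσ'pos.ne'
        have hcm0 : 0 ≤ cm := div_nonneg (by linarith) hσ'pos.le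
        have hcm1 : cm ≤ 1 := by rw [hcmdef, div_le_one hσ'pos]; exact hcm1'
        have hcp0 : 0 ≤ cp := div_nonneg (by linarith) hσ'pos.le
        rw [decomp hmeas hindep hval hdist hjer (c * σ),
          show c * σ - a j / 2 = cm * σ' from hcm_mul.symm,
          show c * σ + a j / 2 = cp * σ' from hcp_mul.symm]
        have em1 : (1 - cm) * σ' = σ' - (c * σ - a j / 2) := by rw [sub_mul, one_mul, hcm_mul]
        rcases le_or_gt cp 1 with hcp1 | hcp1
        · -- both conditional thresholds usable
          have IH1 := ih (t.erase j) hcard' cm hcm0 hcm1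
          have IH2 := ih (t.erase j) hcard' cp hcp0 hcp1
          rw [← hσ'def] at IH1 IH2
          have ep1 : (1 - cp) * σ' = σ' - (c * σ + a j / 2) := by rw [sub_mul, one_mul, hcp_mul]
          have ineq1 : (1-c)^2*σ'^2 ≤ (σ' - c*σ)^2 + (a j / 2)^2 :=
            ineq_one σ σ' (a j / 2) c hA hσ'pos.le hc0 hσpos hss hc1
          have h1 : (1-c)^2*σ'^2 ≤ ((1-cm)*σ')^2/2 + ((1-cp)*σ')^2/2 := by
            rw [em1, ep1]; nlinarith [ineq1]
          rw [mul_pow, mul_pow] at h1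
          have h4 : (1-c)^2 ≤ (1-cm)^2/2 + (1-cp)^2/2 := by
            rw [← mul_le_mul_iff_left₀ (pow_pos hσ'pos 2)]
            calc (1-c)^2 * σ'^2 ≤ (1-cm)^2*σ'^2/2 + (1-cp)^2*σ'^2/2 := h1
              _ = ((1-cm)^2/2 + (1-cp)^2/2) * σ'^2 := by ring
          calc ENNReal.ofReal ((1-c)^2/4)
              ≤ ENNReal.ofReal ((1/2) * ((1-cm)^2/4) + (1/2) * ((1-cp)^2/4)) :=
                ENNReal.ofReal_le_ofReal (by linarith)
            _ = ENNReal.ofReal ((1/2) * ((1-cm)^2/4)) + ENNReal.ofReal ((1/2) * ((1-cp)^2/4)) :=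
                ENNReal.ofReal_add (by positivity) (by positivity)
            _ = 1/2 * ENNReal.ofReal ((1-cm)^2/4) + 1/2 * ENNReal.ofReal ((1-cp)^2/4) := by
                rw [ENNReal.ofReal_mul (by norm_num), ENNReal.ofReal_mul (by norm_num), ofReal_half']
            _ ≤ _ := add_le_add (mul_le_mul_right IH1 _) (mul_le_mul_right IH2 _)
        · -- upper threshold too large, use only the lower one
          have IH1 := ih (t.erase j) hcard' cm hcm0 hcm1
          rw [← hσ'def] at IH1
          have hD : σ' < c * σ + a j / 2 := by
            have := (one_lt_div hσ'pos).mp (hcpdef ▸ hcp1)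
            linarith
          have ineq2 : 2*(1-c)^2*σ'^2 ≤ (σ' + a j / 2 - c*σ)^2 :=
            ineq_two σ σ' (a j / 2) c hA hb0 hcase.le hD.le hσ'pos hc1 hc0 hσpos hss hsb
          have h1 : 2*(1-c)^2*σ'^2 ≤ ((1-cm)*σ')^2 := by rw [em1]; nlinarith [ineq2]
          rw [mul_pow] at h1
          have h4 : 2*(1-c)^2 ≤ (1-cm)^2 := by
            rw [← mul_le_mul_iff_left₀ (pow_pos hσ'pos 2)]
            calc 2*(1-c)^2 * σ'^2 = 2*((1-c)^2*σ'^2) := by ring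
              _ ≤ (1-cm)^2*σ'^2 := by nlinarith [h1]
          calc ENNReal.ofReal ((1-c)^2/4)
              ≤ ENNReal.ofReal ((1/2) * ((1-cm)^2/4)) := ENNReal.ofReal_le_ofReal (by linarith)
            _ = 1/2 * ENNReal.ofReal ((1-cm)^2/4) := by
                rw [ENNReal.ofReal_mul (by norm_num), ofReal_half']
            _ ≤ 1/2 * ℙ {ω | cm * σ' ≤ ∑ i ∈ t.erase j, a i * (Y i ω - 1/2)} :=
                mul_le_mul_right IH1 _
            _ ≤ _ := le_self_add

lemma eY (hmeas : ∀ i, Measurable (Y i)) (hval : ∀ i ω, Y i ω = 0 ∨ Y i ω = 1)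
    (hdist : ∀ i, ℙ {ω | Y i ω = 1} = 1 / 2) (i : Fin k) :
    ∫ ω, Y i ω ∂ℙ = 1/2 := by
  have hind : Y i = Set.indicator {ω | Y i ω = 1} (fun _ => (1:ℝ)) := by
    funext ω
    rcases hval i ω with h | h
    · rw [Set.indicator_of_notMem (by simp [h]), h]
    · rw [Set.indicator_of_mem (by simp [h]), h]
  calc ∫ ω, Y i ω ∂ℙ = ∫ ω, Set.indicator {ω' | Y i ω' = 1} (fun _ => (1:ℝ)) ω ∂ℙ := by
        rw [← hind]
    _ = (ℙ {ω' | Y i ω' = 1}).toReal • (1:ℝ) := integral_indicator_const _ (hmeas i (measurableSet_singleton 1))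
    _ = 1/2 := by rw [hdist i]; simp [ENNReal.toReal_div]

theorem bernoulli_anticoncentration' (ha : ∀ i, 0 ≤ a i)
    (hmeas : ∀ i, Measurable (Y i))
    (hindep : iIndepFun Y ℙ)
    (hval : ∀ i ω, Y i ω = 0 ∨ Y i ω = 1)
    (hdist : ∀ i, ℙ {ω | Y i ω = 1} = 1 / 2) :
    ∀ c : ℝ, 0 ≤ c → c ≤ 1 →
      ENNReal.ofReal ((1 - c) ^ 2 / 4) ≤
        ℙ {ω | (∫ ω', ∑ i, a i * Y i ω' ∂ℙ) +
            c * Real.sqrt (variance (fun ω' => ∑ i, a i * Y i ω') ℙ)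
          ≤ ∑ i, a i * Y i ω} := by
  intro c hc0 hc1
  have hbound : ∀ i, ∀ᵐ ω ∂ℙ, Y i ω ∈ Set.Icc (0:ℝ) 1 := fun i =>
    ae_of_all _ fun ω => Set.mem_Icc.mpr (by
      rcases hval i ω with h | h <;> rw [h] <;> norm_num)
  have hYL2 : ∀ i, MemLp (Y i) 2 ℙ := fun i =>
    memLp_of_bounded (hbound i) (hmeas i).aestronglyMeasurable 2
  have hYint : ∀ i, Integrable (Y i) ℙ := fun i =>
    memLp_one_iff_integrable.mp
      (memLp_of_bounded (hbound i) (hmeas i).aestronglyMeasurable 1)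
  have hEY := eY hmeas hval hdist
  have hEX : ∫ ω, ∑ i, a i * Y i ω ∂ℙ = ∑ i : Fin k, a i / 2 := by
    rw [integral_finset_sum Finset.univ (fun i _ => ((hYint i).const_mul (a i)))]
    apply Finset.sum_congr rfl
    intro i _
    rw [integral_const_mul, hEY i]
    ring
  have hL2 : ∀ i : Fin k, MemLp (fun ω => a i * Y i ω) 2 ℙ := fun i => (hYL2 i).const_mul (a i)
  have hindep' : iIndepFun (fun i ω => a i * Y i ω) ℙ :=
    hindep.comp (fun i x => a i * x) (fun i => measurable_id.const_mul _)
  have hvarY : ∀ i, variance (Y i) ℙ = 1/4 := by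
    intro i
    rw [variance_eq_sub (hYL2 i)]
    have hsq : (Y i)^2 = Y i := by
      funext ω
      simp only [Pi.pow_apply]
      rcases hval i ω with h | h <;> rw [h] <;> norm_num
    rw [hsq]
    have : (∫ ω, Y i ω ∂ℙ) = 1/2 := hEY i
    rw [show ℙ[Y i] = (1:ℝ)/2 from this]
    norm_num
  have hV : variance (fun ω' => ∑ i, a i * Y i ω') ℙ = (∑ i : Fin k, a i ^ 2)/4 := by
    have hfun : (fun ω' => ∑ i, a i * Y i ω') = ∑ i : Fin k, (fun ω => a i * Y i ω) := by
      funext ω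
      rw [Finset.sum_apply]
    rw [hfun, IndepFun.variance_sum (fun i _ => hL2 i)
      (fun i _ j _ hij => hindep'.indepFun hij), Finset.sum_div]
    apply Finset.sum_congr rfl
    intro i _
    rw [variance_const_mul, hvarY i]
    ring
  have hsetE : {ω | (∫ ω', ∑ i, a i * Y i ω' ∂ℙ) +
          c * Real.sqrt (variance (fun ω' => ∑ i, a i * Y i ω') ℙ) ≤ ∑ i, a i * Y i ω}
      = {ω | c * Real.sqrt ((∑ i : Fin k, a i ^ 2)/4) ≤ ∑ i : Fin k, a i * (Y i ω - 1/2)} := by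
    rw [hEX, hV]
    ext ω
    simp only [Set.mem_setOf_eq]
    have hZ : ∑ i : Fin k, a i * (Y i ω - 1/2) = (∑ i, a i * Y i ω) - ∑ i : Fin k, a i / 2 := by
      rw [← Finset.sum_sub_distrib]
      apply Finset.sum_congr rfl
      intros
      ring
    rw [hZ]
    constructor <;> intro <;> linarith
  rw [hsetE]
  exact mainAux ha hmeas hindep hval hdist k Finset.univ (by simp) c hc0 hc1

end

end BernoulliAnticoncentrationAux

/-- Let `Y_1, …, Y_k` be independent random variables, each uniformly
distributed on `{0,1}`, and let `a_1, …, a_k` be non-negative reals. Let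
`X = Σ a_i Y_i`, `μ = E[X]`, `σ = √(Var X)`. Then for every `c ∈ [0,1]`,
`Pr(X ≥ μ + c·σ) ≥ (1 − c)²/4`. -/
theorem bernoulli_anticoncentration {Ω : Type*} [MeasureSpace Ω]
    [IsProbabilityMeasure (ℙ : Measure Ω)]
    (k : ℕ) (Y : Fin k → Ω → ℝ) (a : Fin k → ℝ) (ha : ∀ i, 0 ≤ a i)
    (hmeas : ∀ i, Measurable (Y i))
    (hindep : iIndepFun Y ℙ)
    (hval : ∀ i ω, Y i ω = 0 ∨ Y i ω = 1)
    (hdist : ∀ i, ℙ {ω | Y i ω = 1} = 1 / 2) :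
    ∀ c : ℝ, 0 ≤ c → c ≤ 1 →
      ENNReal.ofReal ((1 - c) ^ 2 / 4) ≤
        ℙ {ω | (∫ ω', ∑ i, a i * Y i ω' ∂ℙ) +
            c * Real.sqrt (variance (fun ω' => ∑ i, a i * Y i ω') ℙ)
          ≤ ∑ i, a i * Y i ω} := by
  exact BernoulliAnticoncentrationAux.bernoulli_anticoncentration' ha hmeas hindep hval hdist
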